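/- Let A, B be invertible d×d real matrices with B ⪰ I (i.e., B symmetric with all eigenvalues ≥ 1). Then for every nonzero x ∈ ℝ^d, ‖f_{BA}(x) − f_A(x)‖₂ ≤ ‖B − I‖₂, where f_M(y) := My/‖My‖₂ and ‖·‖₂ on matrices is the operator norm. -/

import Mathlib

/-- The normalized linear transform `f_A(x) = Ax / ‖Ax‖₂`. -/
noncomputable def forster {d : ℕ} (A : Matrix (Fin d) (Fin d) ℝ)
    (x : EuclideanSpace ℝ (Fin d)) : EuclideanSpace ℝ (Fin d) :=
  ‖Matrix.toEuclideanLin A x‖⁻¹ • Matrix.toEuclideanLin A x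

open scoped RealInnerProductSpace
lemma aux_vec {E : Type*} [NormedAddCommGroup E] [InnerProductSpace ℝ E]
    (u v : E) (hu : ‖u‖ = 1) (α : ℝ)
    (hβ0 : 0 ≤ ⟪v, u⟫) (hβα : ⟪v, u⟫ ≤ α) (hv : ‖v‖ ^ 2 ≤ α * ⟪v, u⟫) :
    ‖‖u + v‖⁻¹ • (u + v) - u‖ ≤ α := by
  have hα : 0 ≤ α := le_trans hβ0 hβα
  set β : ℝ := ⟪v, u⟫ with hβ
  have hc : ⟪u, v⟫ = β := real_inner_comm v u
  have ht2 : ‖u + v‖ ^ 2 = 1 + 2 * β + ‖v‖ ^ 2 := by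
    rw [norm_add_sq_real, hu, hc]; ring
  have hvsq : ‖v‖ ^ 2 ≤ α ^ 2 := le_trans hv (by nlinarith)
  have ht1 : 1 ≤ ‖u + v‖ := by
    nlinarith [norm_nonneg (u + v), sq_nonneg (‖v‖)]
  have htle : ‖u + v‖ ≤ 1 + α := by
    nlinarith [norm_nonneg (u + v)]
  set t : ℝ := ‖u + v‖ with hthd
  have ht0 : t ≠ 0 := by positivity
  have key : ‖u + v - t • u‖ ≤ α := by
    have heq : u + v - t • u = v - (t - 1) • u := by
      rw [sub_smul, one_smul]; abel
    rw [heq]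
    have hns : ‖v - (t - 1) • u‖ ^ 2 = ‖v‖ ^ 2 - 2 * (t - 1) * β + (t - 1) ^ 2 := by
      rw [norm_sub_sq_real, real_inner_smul_right, norm_smul, hu]
      rw [Real.norm_eq_abs, abs_of_nonneg (by linarith)]
      ring
    nlinarith [norm_nonneg (v - (t - 1) • u), sq_nonneg (α - (t-1)), sq_nonneg (α - β),
      mul_nonneg (sub_nonneg.2 ht1) (sub_nonneg.2 htle)]
  calc ‖t⁻¹ • (u + v) - u‖ = t⁻¹ * ‖u + v - t • u‖ := by
        rw [← norm_smul_of_nonneg (by positivity : (0:ℝ) ≤ t⁻¹), smul_sub, smul_smul,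
          inv_mul_cancel₀ ht0, one_smul]
    _ ≤ 1 * α := by
        apply mul_le_mul (by rw [inv_le_one_iff₀]; right; exact ht1) key (norm_nonneg _) one_pos.le
    _ = α := one_mul α

theorem forster_perturbation {d : ℕ} (A B : Matrix (Fin d) (Fin d) ℝ)
    (hA : IsUnit A.det) (hB : IsUnit B.det)
    (hBI : (B - 1).PosSemidef)
    (x : EuclideanSpace ℝ (Fin d)) (hx : x ≠ 0) :
    ‖forster (B * A) x - forster A x‖ ≤ ‖Matrix.toEuclideanCLM (𝕜 := ℝ) (n := Fin d) (B - 1)‖ := by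
  classical
  set y : EuclideanSpace ℝ (Fin d) := Matrix.toEuclideanLin A x with hy
  -- y ≠ 0
  have hy0 : y ≠ 0 := by
    intro h
    apply hx
    have h2 := congrArg (Matrix.toEuclideanLin A⁻¹) h
    rw [map_zero] at h2
    have h3 : Matrix.toEuclideanLin A⁻¹ (Matrix.toEuclideanLin A x)
        = Matrix.toEuclideanLin (A⁻¹ * A) x := by
      simp [Matrix.toEuclideanLin_apply, Matrix.mulVec_mulVec]
    rw [h3, Matrix.nonsing_inv_mul A hA] at h2
    simpa [Matrix.toEuclideanLin_apply] using h2
  have hny : (0:ℝ) < ‖y‖ := norm_pos_iff.2 hy0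
  set u : EuclideanSpace ℝ (Fin d) := ‖y‖⁻¹ • y with hu
  have hu1 : ‖u‖ = 1 := norm_smul_inv_norm hy0
  -- rewrite forster (B*A) x
  have hBAy : Matrix.toEuclideanLin (B * A) x = Matrix.toEuclideanLin B y := by
    simp [hy, Matrix.toEuclideanLin_apply, Matrix.mulVec_mulVec]
  have hBu : Matrix.toEuclideanLin B u = ‖y‖⁻¹ • Matrix.toEuclideanLin B y := by
    rw [hu, map_smul]
  have hfBA : forster (B * A) x = ‖Matrix.toEuclideanLin B u‖⁻¹ • Matrix.toEuclideanLin B u := by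
    rw [forster, hBAy, hBu, norm_smul, smul_smul]
    congr 1
    rw [norm_inv, Real.norm_eq_abs, abs_of_pos hny, mul_inv, inv_inv]
    field_simp
  have hfA : forster A x = u := by
    rw [forster, ← hy, hu]
  -- set v := (B-1) u
  set C := Matrix.toEuclideanCLM (𝕜 := ℝ) (n := Fin d) (B - 1) with hC
  set v : EuclideanSpace ℝ (Fin d) := C u with hv
  have huv : Matrix.toEuclideanLin B u = u + v := by
    have : C u = Matrix.toEuclideanLin (B - 1) u := by
      rw [hC, ← Matrix.coe_toEuclideanCLM_eq_toEuclideanLin]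
      rfl
    rw [hv, this, map_sub]
    simp [Matrix.toEuclideanLin_apply, Matrix.one_mulVec]
  rw [hfBA, hfA, huv]
  -- facts about v via the sqrt
  obtain ⟨R, hRh, hRR⟩ : ∃ R : Matrix (Fin d) (Fin d) ℝ, R.IsHermitian ∧ R * R = B - 1 := by
    open scoped MatrixOrder in
    exact ⟨CFC.sqrt (B - 1), (Matrix.nonneg_iff_posSemidef.mp (CFC.sqrt_nonneg (B - 1))).1, CFC.sqrt_mul_sqrt_self _ hBI.nonneg⟩
  set S := Matrix.toEuclideanCLM (𝕜 := ℝ) (n := Fin d) R with hS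
  have hSS : S * S = C := by
    rw [hS, hC, ← map_mul, hRR]
  have hSsa : IsSelfAdjoint S := by
    rw [hS, IsSelfAdjoint, ← map_star]
    congr 1
  have hSinner : ∀ a b : EuclideanSpace ℝ (Fin d), ⟪S a, b⟫ = ⟪a, S b⟫ := by
    intro a b
    conv_lhs => rw [← hSsa.adjoint_eq]
    exact ContinuousLinearMap.adjoint_inner_left S b a
  have hβ : ⟪v, u⟫ = ‖S u‖ ^ 2 := by
    rw [hv, ← hSS]
    show ⟪S (S u), u⟫ = ‖S u‖ ^ 2
    rw [hSinner, real_inner_comm, real_inner_self_eq_norm_sq]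
  have hβ0 : 0 ≤ ⟪v, u⟫ := by rw [hβ]; positivity
  have hβα : ⟪v, u⟫ ≤ ‖C‖ := by
    calc ⟪v, u⟫ ≤ ‖v‖ * ‖u‖ := real_inner_le_norm v u
      _ ≤ (‖C‖ * ‖u‖) * ‖u‖ := by
          apply mul_le_mul_of_nonneg_right (C.le_opNorm u) (norm_nonneg u)
      _ = ‖C‖ := by rw [hu1]; ring
  have hnormS : ‖S‖ ^ 2 = ‖C‖ := by
    have := CStarRing.norm_star_mul_self (x := S)
    rw [hSsa.star_eq, hSS] at this
    rw [this]; ring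
  have hvsq : ‖v‖ ^ 2 ≤ ‖C‖ * ⟪v, u⟫ := by
    have h1 : ‖v‖ ≤ ‖S‖ * ‖S u‖ := by
      rw [hv, ← hSS]
      exact S.le_opNorm (S u)
    calc ‖v‖ ^ 2 ≤ (‖S‖ * ‖S u‖) ^ 2 := by
          apply pow_le_pow_left₀ (norm_nonneg v) h1 2
      _ = ‖C‖ * ⟪v, u⟫ := by rw [hβ, ← hnormS]; ring
  exact aux_vec u v hu1 ‖C‖ hβ0 hβα hvsq
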